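/- arXiv:math/0112153 — 10 statements merged into one kernel-verified Lean document; each statement's English description precedes it below -/
import Mathlib

section
/- Let $\Gamma$ be a topological abelian group and $\omega = (\omega_1, \omega_2, \ldots)$ a sequence in $\Gamma$. Let $X \subset \Gamma$ be an $\omega$-invariant set (i.e., $X$ is closed and $X + \omega_i \subset X$ for all $i$), and let $X^{(\infty)}$ be a closed set with $H_X \subset X^{(\infty)} \subset X$, where $H_X = \overline{X \setminus \bigcup_{i=1}^\infty (X+\omega_i)} \cup \bigcap_{n=1}^\infty \overline{\bigcup_{i=n}^\infty (X+\omega_i)}$. Define $X^{(n)} = X^{(\infty)} \cup \bigcup_{i=n+1}^\infty (X+\omega_i)$ for $n \in \mathbb{N}$. Then $X^{(n)}$ is closed for all $n$. -/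
open Set Filter Topology

variable {Γ : Type*}

/-- The translate `X + g` of a set. -/
def trSet [Add Γ] (X : Set Γ) (g : Γ) : Set Γ := (fun x => x + g) '' X

/-- `X` is ω-invariant: closed and `X + ω i ⊆ X` for all `i ≥ 1`. -/
def OmegaInv [Add Γ] [TopologicalSpace Γ] (ω : ℕ → Γ) (X : Set Γ) : Prop :=
  IsClosed X ∧ ∀ i, 1 ≤ i → trSet X (ω i) ⊆ X

/-- The set `H_X`. -/
def HX [Add Γ] [TopologicalSpace Γ] (ω : ℕ → Γ) (X : Set Γ) : Set Γ :=
  closure (X \ ⋃ i ≥ 1, trSet X (ω i)) ∪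
    ⋂ n ≥ 1, closure (⋃ i ≥ n, trSet X (ω i))

/-- An ω-invariant pair `(X, X^∞)`. -/
def OmegaInvPair [Add Γ] [TopologicalSpace Γ] (ω : ℕ → Γ) (X Xinf : Set Γ) : Prop :=
  OmegaInv ω X ∧ IsClosed Xinf ∧ HX ω X ⊆ Xinf ∧ Xinf ⊆ X

/-- The set `X^{(n)} = X^∞ ∪ ⋃_{i ≥ n+1} (X + ω_i)`. -/
def Xn [Add Γ] [TopologicalSpace Γ] (ω : ℕ → Γ) (X Xinf : Set Γ) (n : ℕ) : Set Γ :=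
  Xinf ∪ ⋃ i ≥ n + 1, trSet X (ω i)

/-- A word: a finite list of positive integers. -/
def IsWord (μ : List ℕ) : Prop := ∀ i ∈ μ, 1 ≤ i

/-- A word with letters in `{1, …, n}`. -/
def IsWordLe (n : ℕ) (μ : List ℕ) : Prop := ∀ i ∈ μ, 1 ≤ i ∧ i ≤ n

/-- `ω_μ`, the sum of `ω i` over the letters of `μ`. -/
def wsum [AddCommMonoid Γ] (ω : ℕ → Γ) (μ : List ℕ) : Γ := (μ.map ω).sum

/-- The semigroup (with 0) generated by the `ω_i`. -/
def sgSet [AddCommMonoid Γ] (ω : ℕ → Γ) : Set Γ :=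
  {γ | ∃ μ : List ℕ, IsWord μ ∧ γ = wsum ω μ}

/-- Primeness condition for an ω-invariant set. -/
def PrimeCond [Add Γ] [TopologicalSpace Γ] (ω : ℕ → Γ) (X : Set Γ) : Prop :=
  ∀ X1 X2 : Set Γ, OmegaInv ω X1 → OmegaInv ω X2 → X ⊆ X1 ∪ X2 → X ⊆ X1 ∨ X ⊆ X2

/-- Primeness condition for an ω-invariant pair (componentwise inclusion/union). -/
def PrimePair [Add Γ] [TopologicalSpace Γ] (ω : ℕ → Γ) (X Xinf : Set Γ) : Prop :=
  ∀ X1 X1i X2 X2i : Set Γ, OmegaInvPair ω X1 X1i → OmegaInvPair ω X2 X2i →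
    X ⊆ X1 ∪ X2 → Xinf ⊆ X1i ∪ X2i →
    (X ⊆ X1 ∧ Xinf ⊆ X1i) ∨ (X ⊆ X2 ∧ Xinf ⊆ X2i)

theorem stmt0 [AddCommGroup Γ] [TopologicalSpace Γ] [IsTopologicalAddGroup Γ]
    [LocallyCompactSpace Γ] [SecondCountableTopology Γ] [T2Space Γ]
    (ω : ℕ → Γ) (X Xinf : Set Γ) (h : OmegaInvPair ω X Xinf) :
    ∀ n : ℕ, IsClosed (Xn ω X Xinf n) := by
  obtain ⟨⟨hXc, _⟩, hXinfc, hHX, _⟩ := h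
  intro n
  set T : ℕ → Set Γ := fun i => trSet X (ω i) with hT
  have hTc : ∀ i, IsClosed (T i) := by
    intro i
    have : T i = (Homeomorph.addRight (ω i)) '' X := rfl
    rw [this, Homeomorph.isClosed_image]
    exact hXc
  apply isClosed_of_closure_subset
  intro x hx
  rw [Xn, closure_union] at hx
  rcases hx with hx | hx
  · exact Or.inl (hXinfc.closure_subset hx)
  by_cases hmem : ∃ i, n + 1 ≤ i ∧ x ∈ T i
  · obtain ⟨i, hi, hxi⟩ := hmem
    exact Or.inr (mem_iUnion₂.2 ⟨i, hi, hxi⟩)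
  push_neg at hmem
  -- x lies in every tail closure
  left
  have key : ∀ m, n + 1 ≤ m → x ∈ closure (⋃ i ≥ m, T i) := by
    intro m hm
    have hsub : (⋃ i ≥ n + 1, T i) ⊆ (⋃ i ∈ Set.Ico (n + 1) m, T i) ∪ ⋃ i ≥ m, T i := by
      intro y hy
      obtain ⟨i, hi, hyi⟩ := mem_iUnion₂.1 hy
      rcases lt_or_ge i m with h' | h'
      · exact Or.inl (mem_iUnion₂.2 ⟨i, ⟨hi, h'⟩, hyi⟩)
      · exact Or.inr (mem_iUnion₂.2 ⟨i, h', hyi⟩)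
    have hA : IsClosed (⋃ i ∈ Set.Ico (n + 1) m, T i) :=
      (Set.finite_Ico _ _).isClosed_biUnion (fun i _ => hTc i)
    have h2 := closure_mono hsub hx
    rw [closure_union, hA.closure_eq] at h2
    rcases h2 with h' | h'
    · obtain ⟨i, hi, hyi⟩ := mem_iUnion₂.1 h'
      exact absurd hyi (hmem i hi.1)
    · exact h'
  have hmemI : x ∈ ⋂ m ≥ 1, closure (⋃ i ≥ m, T i) := by
    rw [mem_iInter₂]
    intro m _
    refine closure_mono ?_ (key (max m (n + 1)) (le_max_right _ _))
    intro y hy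
    obtain ⟨i, hi, hyi⟩ := mem_iUnion₂.1 hy
    exact mem_iUnion₂.2 ⟨i, le_trans (le_max_left _ _) hi, hyi⟩
  exact hHX (Or.inr hmemI)
end

section
/- Let $(X, X^{(\infty)})$ be an $\omega$-invariant pair with $X^{(n)} = X^{(\infty)} \cup \bigcup_{i=n+1}^\infty (X+\omega_i)$. For any positive integer $n$, $X = \bigcup_{\mu \in \mathcal{W}_n} (X^{(n)} + \omega_\mu) \cup \bigcap_{k=1}^\infty \big( \bigcup_{\mu \in \mathcal{W}_n^{(k)}} (X + \omega_\mu) \big)$, where $\mathcal{W}_n^{(k)}$ is the set of words of length $k$ in $\{1,\ldots,n\}$, $\mathcal{W}_n = \bigcup_{k \geq 0} \mathcal{W}_n^{(k)}$, and $\omega_\mu = \sum_{j=1}^{|\mu|} \omega_{i_j}$ for $\mu = (i_1,\ldots,i_k)$. -/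
open Set Filter Topology

variable {Γ : Type*}

lemma wsum_cons' [AddCommMonoid Γ] (ω : ℕ → Γ) (i : ℕ) (μ : List ℕ) :
    wsum ω (i :: μ) = ω i + wsum ω μ := by simp [wsum]

lemma trSet_word' [AddCommMonoid Γ] [TopologicalSpace Γ] {ω : ℕ → Γ} {X : Set Γ}
    (h : OmegaInv ω X) : ∀ μ : List ℕ, IsWord μ → trSet X (wsum ω μ) ⊆ X := by
  intro μ
  induction μ with
  | nil =>
    intro _ x hx
    obtain ⟨y, hy, rfl⟩ := hx
    simpa [wsum] using hy
  | cons i μ ih =>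
    intro hw x hx
    obtain ⟨y, hy, rfl⟩ := hx
    have h1 : y + ω i ∈ X := h.2 i (hw i (by simp)) ⟨y, hy, rfl⟩
    have h2 : (y + ω i) + wsum ω μ ∈ X :=
      ih (fun j hj => hw j (by simp [hj])) ⟨_, h1, rfl⟩
    show y + wsum ω (i :: μ) ∈ X
    rw [wsum_cons', ← add_assoc]
    exact h2

lemma step' [AddCommMonoid Γ] [TopologicalSpace Γ] {ω : ℕ → Γ} {X Xinf : Set Γ}
    (h : OmegaInvPair ω X Xinf) (n : ℕ) :
    X ⊆ Xn ω X Xinf n ∪ ⋃ i, ⋃ _ : 1 ≤ i ∧ i ≤ n, trSet X (ω i) := by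
  intro x hx
  by_cases hc : ∃ i, 1 ≤ i ∧ i ≤ n ∧ x ∈ trSet X (ω i)
  · obtain ⟨i, h1, h2, h3⟩ := hc
    exact Or.inr (mem_iUnion₂.2 ⟨i, ⟨h1, h2⟩, h3⟩)
  · by_cases hd : ∃ i, n + 1 ≤ i ∧ x ∈ trSet X (ω i)
    · obtain ⟨i, h1, h2⟩ := hd
      exact Or.inl (Or.inr (mem_iUnion₂.2 ⟨i, h1, h2⟩))
    · push_neg at hc hd
      have hnot : x ∉ ⋃ i ≥ 1, trSet X (ω i) := by
        intro hmem
        obtain ⟨i, hi, hxi⟩ := mem_iUnion₂.1 hmem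
        rcases le_or_gt i n with hle | hlt
        · exact hc i hi hle hxi
        · exact hd i hlt hxi
      have hHX : x ∈ HX ω X := Or.inl (subset_closure ⟨hx, hnot⟩)
      exact Or.inl (Or.inl (h.2.2.1 hHX))

lemma main_ind' [AddCommMonoid Γ] [TopologicalSpace Γ] {ω : ℕ → Γ} {X Xinf : Set Γ}
    (h : OmegaInvPair ω X Xinf) (n : ℕ) : ∀ k : ℕ,
    X ⊆ (⋃ μ : List ℕ, ⋃ _ : IsWordLe n μ, trSet (Xn ω X Xinf n) (wsum ω μ)) ∪
        ⋃ μ : List ℕ, ⋃ _ : IsWordLe n μ ∧ μ.length = k, trSet X (wsum ω μ) := by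
  intro k
  induction k with
  | zero =>
    intro x hx
    refine Or.inr (mem_iUnion₂.2 ⟨[], ⟨fun i hi => by simp at hi, rfl⟩, ?_⟩)
    exact ⟨x, hx, by simp [wsum]⟩
  | succ k ih =>
    intro x hx
    rcases ih hx with hl | hr
    · exact Or.inl hl
    · obtain ⟨μ, ⟨hμ, hlen⟩, hmem⟩ := mem_iUnion₂.1 hr
      obtain ⟨y, hy, rfl⟩ := hmem
      rcases step' h n hy with hy1 | hy2
      · exact Or.inl (mem_iUnion₂.2 ⟨μ, hμ, ⟨y, hy1, rfl⟩⟩)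
      · obtain ⟨i, ⟨hi1, hi2⟩, ⟨z, hz, rfl⟩⟩ := mem_iUnion₂.1 hy2
        refine Or.inr (mem_iUnion₂.2 ⟨i :: μ, ⟨?_, by simp [hlen]⟩, ?_⟩)
        · intro j hj
          rcases List.mem_cons.1 hj with rfl | hj'
          · exact ⟨hi1, hi2⟩
          · exact hμ j hj'
        · refine ⟨z, hz, ?_⟩
          show z + wsum ω (i :: μ) = z + ω i + wsum ω μ
          rw [wsum_cons', ← add_assoc]

theorem stmt2 [AddCommGroup Γ] [TopologicalSpace Γ] [IsTopologicalAddGroup Γ]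
    [LocallyCompactSpace Γ] [SecondCountableTopology Γ] [T2Space Γ]
    (ω : ℕ → Γ) (X Xinf : Set Γ) (h : OmegaInvPair ω X Xinf) (n : ℕ) (hn : 1 ≤ n) :
    X = (⋃ μ : List ℕ, ⋃ _ : IsWordLe n μ, trSet (Xn ω X Xinf n) (wsum ω μ)) ∪
      ⋂ k ≥ 1, ⋃ μ : List ℕ, ⋃ _ : IsWordLe n μ ∧ μ.length = k, trSet X (wsum ω μ) := by
  have hX : OmegaInv ω X := h.1
  have hXnX : Xn ω X Xinf n ⊆ X := by
    rintro x (hx | hx)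
    · exact h.2.2.2 hx
    · obtain ⟨i, hi, hxi⟩ := mem_iUnion₂.1 hx
      exact hX.2 i (le_trans (Nat.le_add_left 1 n) hi) hxi
  apply Subset.antisymm
  · intro x hx
    by_cases hI : ∀ k, 1 ≤ k →
        x ∈ ⋃ μ : List ℕ, ⋃ _ : IsWordLe n μ ∧ μ.length = k, trSet X (wsum ω μ)
    · exact Or.inr (mem_iInter₂.2 hI)
    · push_neg at hI
      obtain ⟨k, hk, hnk⟩ := hI
      rcases main_ind' h n k hx with hl | hr
      · exact Or.inl hl
      · exact absurd hr hnk
  · rintro x (hx | hx)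
    · obtain ⟨μ, hμ, hmem⟩ := mem_iUnion₂.1 hx
      have : trSet (Xn ω X Xinf n) (wsum ω μ) ⊆ trSet X (wsum ω μ) :=
        image_mono hXnX
      exact trSet_word' hX μ (fun i hi => (hμ i hi).1) (this hmem)
    · have h1 := mem_iInter₂.1 hx 1 le_rfl
      obtain ⟨μ, ⟨hμ, _⟩, hmem⟩ := mem_iUnion₂.1 h1
      exact trSet_word' hX μ (fun i hi => (hμ i hi).1) hmem
end

section
/- For any $\gamma \in \Gamma$, the set $\gamma + \overline{\mathrm{sg}}(\omega)$ is a prime $\omega$-invariant set, where an $\omega$-invariant set $X$ is prime if whenever $X_1, X_2$ are $\omega$-invariant sets with $X \subset X_1 \cup X_2$, either $X \subset X_1$ or $X \subset X_2$. -/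
open Set Filter Topology

variable {Γ : Type*}

lemma zero_mem_sgSet [AddCommMonoid Γ] (ω : ℕ → Γ) : (0 : Γ) ∈ sgSet ω :=
  ⟨[], fun i hi => absurd hi List.not_mem_nil, by simp [wsum]⟩

lemma sgSet_add [AddCommMonoid Γ] (ω : ℕ → Γ) {g : Γ} (hg : g ∈ sgSet ω) {i : ℕ}
    (hi : 1 ≤ i) : g + ω i ∈ sgSet ω := by
  obtain ⟨μ, hμ, rfl⟩ := hg
  refine ⟨i :: μ, ?_, ?_⟩
  · intro j hj
    rcases List.mem_cons.mp hj with rfl | hj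
    · exact hi
    · exact hμ j hj
  · simp [wsum, add_comm]

lemma mem_imp_subset [AddCommMonoid Γ] [TopologicalSpace Γ] [ContinuousAdd Γ]
    {ω : ℕ → Γ} {X1 : Set Γ} (h1 : OmegaInv ω X1) {γ : Γ} (hγ : γ ∈ X1) :
    (fun s => γ + s) '' closure (sgSet ω) ⊆ X1 := by
  have hword : ∀ μ : List ℕ, IsWord μ → γ + wsum ω μ ∈ X1 := by
    intro μ
    induction μ with
    | nil => intro _; simpa [wsum] using hγ
    | cons i μ ih =>
      intro hμ
      have hi := hμ i List.mem_cons_self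
      have hμ' : IsWord μ := fun j hj => hμ j (List.mem_cons_of_mem i hj)
      have hmem : (γ + wsum ω μ) + ω i ∈ X1 :=
        h1.2 i hi ⟨γ + wsum ω μ, ih hμ', rfl⟩
      have heq : γ + wsum ω (i :: μ) = (γ + wsum ω μ) + ω i := by
        simp [wsum, add_comm, add_assoc, add_left_comm]
      rw [heq]; exact hmem
  have hmaps : Set.MapsTo (fun s => γ + s) (sgSet ω) X1 := by
    rintro g ⟨μ, hμ, rfl⟩
    exact hword μ hμ
  have hcl := hmaps.closure (continuous_const.add continuous_id)
  rintro x ⟨c, hc, rfl⟩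
  have := hcl hc
  rwa [h1.1.closure_eq] at this

theorem stmt4 [AddCommGroup Γ] [TopologicalSpace Γ] [IsTopologicalAddGroup Γ]
    [LocallyCompactSpace Γ] [SecondCountableTopology Γ] [T2Space Γ]
    (ω : ℕ → Γ) (γ : Γ) :
    OmegaInv ω ((fun s => γ + s) '' closure (sgSet ω)) ∧
      PrimeCond ω ((fun s => γ + s) '' closure (sgSet ω)) := by
  have hinv : OmegaInv ω ((fun s => γ + s) '' closure (sgSet ω)) := by
    constructor
    · exact (Homeomorph.addLeft γ).isClosedMap _ isClosed_closure
    · intro i hi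
      rintro x ⟨y, ⟨c, hc, rfl⟩, rfl⟩
      refine ⟨c + ω i, ?_, by simp only [add_comm, add_left_comm]⟩
      have hmaps : Set.MapsTo (fun s => s + ω i) (sgSet ω) (sgSet ω) :=
        fun g hg => sgSet_add ω hg hi
      exact hmaps.closure (continuous_id.add continuous_const) hc
  refine ⟨hinv, ?_⟩
  intro X1 X2 h1 h2 hsub
  have hγmem : γ ∈ (fun s => γ + s) '' closure (sgSet ω) :=
    ⟨0, subset_closure (zero_mem_sgSet ω), by simp⟩
  rcases hsub hγmem with h | h
  · exact Or.inl (mem_imp_subset h1 h)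
  · exact Or.inr (mem_imp_subset h2 h)
end

section
/- An $\omega$-invariant set $X \subset \Gamma$ is prime if and only if for any $\gamma_1, \gamma_2 \in X$ and any neighborhoods $U_1$ of $\gamma_1$ and $U_2$ of $\gamma_2$, there exist $\gamma \in X$ and words $\mu_1, \mu_2 \in \mathcal{W}_\infty$ with $\gamma + \omega_{\mu_1} \in U_1$ and $\gamma + \omega_{\mu_2} \in U_2$. -/
open Set Filter Topology

variable {Γ : Type*}

lemma word_mem_invariant [AddCommGroup Γ] [TopologicalSpace Γ] {ω : ℕ → Γ} {Z : Set Γ}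
    (hZ : OmegaInv ω Z) : ∀ (μ : List ℕ), IsWord μ → ∀ x ∈ Z, x + wsum ω μ ∈ Z := by
  intro μ
  induction μ with
  | nil => intro _ x hx; simpa [wsum] using hx
  | cons i μ ih =>
    intro hw x hx
    have hi : 1 ≤ i := hw i (by simp)
    have hxi : x + ω i ∈ Z := hZ.2 i hi ⟨x, hx, rfl⟩
    have hμ : IsWord μ := fun j hj => hw j (by simp [hj])
    have := ih hμ (x + ω i) hxi
    simpa [wsum, add_assoc] using this

theorem stmt5 [AddCommGroup Γ] [TopologicalSpace Γ] [IsTopologicalAddGroup Γ]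
    [LocallyCompactSpace Γ] [SecondCountableTopology Γ] [T2Space Γ]
    (ω : ℕ → Γ) (X : Set Γ) (hX : OmegaInv ω X) :
    PrimeCond ω X ↔
      ∀ γ1 ∈ X, ∀ γ2 ∈ X, ∀ U1 ∈ 𝓝 γ1, ∀ U2 ∈ 𝓝 γ2,
        ∃ γ ∈ X, ∃ μ1 μ2 : List ℕ, IsWord μ1 ∧ IsWord μ2 ∧
          γ + wsum ω μ1 ∈ U1 ∧ γ + wsum ω μ2 ∈ U2 := by
  constructor
  · intro hp γ1 hγ1 γ2 hγ2 U1 hU1 U2 hU2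
    obtain ⟨V1, hV1s, hV1o, hγ1V⟩ := mem_nhds_iff.mp hU1
    obtain ⟨V2, hV2s, hV2o, hγ2V⟩ := mem_nhds_iff.mp hU2
    by_contra hcon
    push_neg at hcon
    set Y1 : Set Γ := X ∩ ⋂ (μ : List ℕ) (_ : IsWord μ), (fun x => x + wsum ω μ) ⁻¹' V1ᶜ
      with hY1
    set Y2 : Set Γ := X ∩ ⋂ (μ : List ℕ) (_ : IsWord μ), (fun x => x + wsum ω μ) ⁻¹' V2ᶜ
      with hY2
    have hclosed : ∀ (V : Set Γ), IsOpen V →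
        IsClosed (X ∩ ⋂ (μ : List ℕ) (_ : IsWord μ), (fun x => x + wsum ω μ) ⁻¹' Vᶜ) := by
      intro V hV
      exact hX.1.inter (isClosed_iInter fun μ => isClosed_iInter fun _ =>
        (hV.isClosed_compl).preimage (continuous_add_right _))
    have hinv : ∀ (V : Set Γ),
        ∀ i, 1 ≤ i → trSet (X ∩ ⋂ (μ : List ℕ) (_ : IsWord μ),
          (fun x => x + wsum ω μ) ⁻¹' Vᶜ) (ω i) ⊆
          X ∩ ⋂ (μ : List ℕ) (_ : IsWord μ), (fun x => x + wsum ω μ) ⁻¹' Vᶜ := by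
      intro V i hi
      rintro _ ⟨y, ⟨hyX, hy⟩, rfl⟩
      refine ⟨hX.2 i hi ⟨y, hyX, rfl⟩, ?_⟩
      simp only [mem_iInter, mem_preimage, mem_compl_iff] at hy ⊢
      intro μ hμ
      have hw : IsWord (i :: μ) := by
        intro j hj
        rcases List.mem_cons.mp hj with h | h
        · exact h ▸ hi
        · exact hμ j h
      have := hy (i :: μ) hw
      simpa [wsum, add_assoc] using this
    have hsub : X ⊆ Y1 ∪ Y2 := by
      intro x hx
      by_contra hxn
      simp only [mem_union, hY1, hY2, mem_inter_iff, mem_iInter, mem_preimage,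
        mem_compl_iff, not_or, not_and, not_forall, not_not] at hxn
      obtain ⟨h1, h2⟩ := hxn
      obtain ⟨μ1, hμ1, hm1⟩ := h1 hx
      obtain ⟨μ2, hμ2, hm2⟩ := h2 hx
      exact hcon x hx μ1 μ2 hμ1 hμ2 (hV1s hm1) (hV2s hm2)
    rcases hp Y1 Y2 ⟨hclosed V1 hV1o, hinv V1⟩ ⟨hclosed V2 hV2o, hinv V2⟩ hsub with h | h
    · have := (h hγ1).2
      simp only [mem_iInter, mem_preimage, mem_compl_iff] at this
      have h0 := this [] (by intro j hj; simp at hj)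
      simp [wsum] at h0
      exact h0 hγ1V
    · have := (h hγ2).2
      simp only [mem_iInter, mem_preimage, mem_compl_iff] at this
      have h0 := this [] (by intro j hj; simp at hj)
      simp [wsum] at h0
      exact h0 hγ2V
  · intro h X1 X2 h1 h2 hsub
    by_contra hcon
    push_neg at hcon
    obtain ⟨hc1, hc2⟩ := hcon
    obtain ⟨γ1, hγ1X, hγ1⟩ := Set.not_subset.mp hc1
    obtain ⟨γ2, hγ2X, hγ2⟩ := Set.not_subset.mp hc2
    obtain ⟨γ, hγX, μ1, μ2, hw1, hw2, hm1, hm2⟩ :=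
      h γ1 hγ1X γ2 hγ2X X1ᶜ (h1.1.isOpen_compl.mem_nhds hγ1) X2ᶜ (h2.1.isOpen_compl.mem_nhds hγ2)
    rcases hsub hγX with hγ1' | hγ2'
    · exact hm1 (word_mem_invariant h1 μ1 hw1 γ hγ1')
    · exact hm2 (word_mem_invariant h2 μ2 hw2 γ hγ2')
end

section
/- If an $\omega$-invariant pair $(X, X^{(\infty)})$ is prime, then either $X^{(\infty)} = H_X$ or $X^{(\infty)} = H_X \cup \{\gamma\}$ for some single point $\gamma \notin H_X$. -/
open Set Filter Topology

variable {Γ : Type*}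

theorem stmt6 [AddCommGroup Γ] [TopologicalSpace Γ] [IsTopologicalAddGroup Γ]
    [LocallyCompactSpace Γ] [SecondCountableTopology Γ] [T2Space Γ]
    (ω : ℕ → Γ) (X Xinf : Set Γ) (h : OmegaInvPair ω X Xinf)
    (hp : PrimePair ω X Xinf) :
    Xinf = HX ω X ∨ ∃ γ : Γ, γ ∉ HX ω X ∧ Xinf = HX ω X ∪ {γ} := by
  obtain ⟨hinv, hXinfC, hHsub, hsub⟩ := h
  have hHclosed : IsClosed (HX ω X) :=
    isClosed_closure.union (isClosed_biInter fun n _ => isClosed_closure)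
  by_cases hss : (Xinf \ HX ω X).Subsingleton
  · rcases (Xinf \ HX ω X).eq_empty_or_nonempty with he | ⟨γ, hγ⟩
    · left
      refine subset_antisymm (fun x hx => ?_) hHsub
      by_contra hxH
      exact absurd (Set.mem_diff_of_mem hx hxH) (by simp [he])
    · right
      refine ⟨γ, hγ.2, subset_antisymm (fun x hx => ?_) ?_⟩
      · by_cases hxH : x ∈ HX ω X
        · exact Or.inl hxH
        · exact Or.inr (hss ⟨hx, hxH⟩ hγ)
      · exact Set.union_subset hHsub (by simpa using hγ.1)
  · exfalso
    rw [Set.not_subsingleton_iff] at hss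
    obtain ⟨γ₁, h1, γ₂, h2, hne⟩ := hss
    obtain ⟨V₁, V₂, hV₁, hV₂, hγ₁V, hγ₂V, hVdisj⟩ := t2_separation hne
    set U₁ := V₁ ∩ (HX ω X)ᶜ with hU₁def
    set U₂ := V₂ ∩ (HX ω X)ᶜ with hU₂def
    have pair1 : OmegaInvPair ω X (Xinf \ U₁) :=
      ⟨hinv, hXinfC.sdiff (hV₁.inter hHclosed.isOpen_compl),
        fun x hx => ⟨hHsub hx, fun hxU => hxU.2 hx⟩, Set.diff_subset.trans hsub⟩
    have pair2 : OmegaInvPair ω X (Xinf \ U₂) :=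
      ⟨hinv, hXinfC.sdiff (hV₂.inter hHclosed.isOpen_compl),
        fun x hx => ⟨hHsub hx, fun hxU => hxU.2 hx⟩, Set.diff_subset.trans hsub⟩
    have hcover : Xinf ⊆ (Xinf \ U₁) ∪ (Xinf \ U₂) := by
      intro x hx
      by_cases hx1 : x ∈ U₁
      · exact Or.inr ⟨hx, fun hx2 => hVdisj.le_bot ⟨hx1.1, hx2.1⟩⟩
      · exact Or.inl ⟨hx, hx1⟩
    rcases hp X (Xinf \ U₁) X (Xinf \ U₂) pair1 pair2 Set.subset_union_left hcover with
      ⟨_, hi⟩ | ⟨_, hi⟩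
    · exact (hi h1.1).2 ⟨hγ₁V, h1.2⟩
    · exact (hi h2.1).2 ⟨hγ₂V, h2.2⟩
end

section
/- Under the assumptions of the previous setting (smallest $K \geq 1$ with $K\omega_1 = 0$, and no sequence of nonempty words $\mu_k$ with first letter $\neq 1$ and $\omega_{\mu_k} \to 0$), for any $\gamma_0 \in \Gamma$ there exists a compact neighborhood $X$ of $\gamma_0$ such that $X \cap (X + \gamma) = \emptyset$ for every $\gamma \in \overline{\mathrm{sg}}(\omega) \setminus \{0\}$. -/
open Set Filter Topology

variable {Γ : Type*}

lemma zero_not_mem_closure [AddCommGroup Γ] [TopologicalSpace Γ] [IsTopologicalAddGroup Γ]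
    [SecondCountableTopology Γ] [T2Space Γ]
    (ω : ℕ → Γ) (K : ℕ) (hK : 1 ≤ K) (hK0 : K • ω 1 = 0)
    (hmin : ∀ m : ℕ, 1 ≤ m → m • ω 1 = 0 → K ≤ m)
    (hnoseq : ¬ ∃ μ : ℕ → List ℕ,
      (∀ k, IsWord (μ k) ∧ μ k ≠ [] ∧ (μ k).head? ≠ some 1) ∧
        Tendsto (fun k => wsum ω (μ k)) atTop (𝓝 0)) :
    (0 : Γ) ∉ closure (sgSet ω \ {0}) := by
  classical
  intro h0
  obtain ⟨x, hx, hxlim⟩ := mem_closure_iff_seq_limit.mp h0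
  set F : Finset Γ := (Finset.Icc 1 (K-1)).image (· • ω 1) with hF
  have h0F : (0:Γ) ∉ (F : Set Γ) := by
    simp only [hF, Finset.coe_image, Set.mem_image, Finset.mem_coe, Finset.mem_Icc]
    rintro ⟨j, ⟨hj1, hj2⟩, hj0⟩
    have := hmin j hj1 hj0
    omega
  have h1 : ((F : Set Γ))ᶜ ∈ 𝓝 (0:Γ) :=
    F.finite_toSet.isClosed.isOpen_compl.mem_nhds h0F
  have hev : ∀ᶠ k in atTop, x k ∈ ((F : Set Γ))ᶜ := hxlim h1
  obtain ⟨N, hN⟩ := eventually_atTop.mp hev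
  have key : ∀ k, ∃ ν : List ℕ, IsWord ν ∧ ν ≠ [] ∧ ν.head? ≠ some 1 ∧
      wsum ω ν = x (k + N) := by
    intro k
    obtain ⟨hmem, hne⟩ := hx (k + N)
    obtain ⟨μ, hμw, hμs⟩ := hmem
    simp only [Set.mem_singleton_iff] at hne
    have hnF : x (k + N) ∉ (F : Set Γ) := hN (k + N) (Nat.le_add_left N k)
    by_cases hall : ∀ i ∈ μ, i = 1
    · exfalso
      have hrep : wsum ω μ = μ.length • ω 1 := by
        have : μ = List.replicate μ.length 1 :=
          List.eq_replicate_length.mpr hall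
        rw [this]
        simp [wsum, List.map_replicate, List.sum_replicate, List.length_replicate]
      set m := μ.length with hm
      have hmod : m • ω 1 = (m % K) • ω 1 := by
        conv_lhs => rw [← Nat.mod_add_div m K]
        rw [add_nsmul, mul_nsmul, hK0, smul_zero, add_zero]
      by_cases hz : m % K = 0
      · apply hne
        rw [hμs, hrep, hmod, hz, zero_smul]
      · apply hnF
        rw [hμs, hrep, hmod]
        simp only [hF, Finset.coe_image, Set.mem_image, Finset.mem_coe, Finset.mem_Icc]
        refine ⟨m % K, ⟨Nat.one_le_iff_ne_zero.mpr hz, ?_⟩, rfl⟩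
        have := Nat.mod_lt m (show 0 < K by omega)
        omega
    · push_neg at hall
      obtain ⟨a, haμ, ha1⟩ := hall
      set p : ℕ → Bool := fun i => decide (i ≠ 1) with hp
      have hperm : List.Perm (μ.filter p ++ μ.filter (fun i => !p i)) μ :=
        List.filter_append_perm p μ
      set ν := μ.filter p ++ μ.filter (fun i => !p i) with hν
      have hmemν : ∀ i ∈ ν, i ∈ μ := fun i hi => hperm.mem_iff.mp hi
      have hfne : μ.filter p ≠ [] := by
        intro hemp
        have : a ∈ μ.filter p := List.mem_filter.mpr ⟨haμ, by simp [hp, ha1]⟩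
        rw [hemp] at this
        exact List.not_mem_nil this
      obtain ⟨b, t, hbt⟩ := List.exists_cons_of_ne_nil hfne
      have hb : b ∈ μ.filter p := hbt ▸ List.mem_cons_self
      have hb1 : b ≠ 1 := by
        have := (List.mem_filter.mp hb).2
        simpa [hp] using this
      refine ⟨ν, fun i hi => hμw i (hmemν i hi), ?_, ?_, ?_⟩
      · simp [hν, hbt]
      · rw [hν, hbt]
        simp [hb1]
      · rw [hμs]
        unfold wsum
        exact ((hperm.map ω).sum_eq)
  choose ν hw hne' hhead hsum using key
  exact hnoseq ⟨ν, fun k => ⟨hw k, hne' k, hhead k⟩, by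
    simp only [hsum]
    exact hxlim.comp (tendsto_add_atTop_nat N)⟩

theorem stmt11 [AddCommGroup Γ] [TopologicalSpace Γ] [IsTopologicalAddGroup Γ]
    [LocallyCompactSpace Γ] [SecondCountableTopology Γ] [T2Space Γ]
    (ω : ℕ → Γ) (K : ℕ) (hK : 1 ≤ K) (hK0 : K • ω 1 = 0)
    (hmin : ∀ m : ℕ, 1 ≤ m → m • ω 1 = 0 → K ≤ m)
    (hnoseq : ¬ ∃ μ : ℕ → List ℕ,
      (∀ k, IsWord (μ k) ∧ μ k ≠ [] ∧ (μ k).head? ≠ some 1) ∧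
        Tendsto (fun k => wsum ω (μ k)) atTop (𝓝 0)) :
    ∀ γ0 : Γ, ∃ X : Set Γ, IsCompact X ∧ X ∈ 𝓝 γ0 ∧
      ∀ γ ∈ closure (sgSet ω) \ {0}, X ∩ trSet X γ = ∅ := by
  intro γ0
  have h0 : (0 : Γ) ∉ closure (sgSet ω \ {0}) :=
    zero_not_mem_closure ω K hK hK0 hmin hnoseq
  set C := closure (sgSet ω \ {0}) with hC
  have hCU : Cᶜ ∈ 𝓝 (0:Γ) := isClosed_closure.isOpen_compl.mem_nhds h0
  have hcont : Tendsto (fun p : Γ × Γ => p.1 - p.2) (𝓝 (γ0, γ0)) (𝓝 0) := by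
    have := (continuous_fst.sub continuous_snd).tendsto ((γ0, γ0) : Γ × Γ)
    rw [show (Prod.fst - Prod.snd : Γ × Γ → Γ) (γ0, γ0) = 0 from sub_self γ0] at this; exact this
  have hpre : (fun p : Γ × Γ => p.1 - p.2) ⁻¹' Cᶜ ∈ 𝓝 ((γ0, γ0) : Γ × Γ) := hcont hCU
  rw [mem_nhds_prod_iff] at hpre
  obtain ⟨u, hu, v, hv, huv⟩ := hpre
  obtain ⟨X, hXnhds, hXsub, hXcomp⟩ := local_compact_nhds (Filter.inter_mem hu hv)
  refine ⟨X, hXcomp, hXnhds, ?_⟩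
  rintro γ ⟨hγcl, hγ0⟩
  have hγC : γ ∈ C := by
    have hsub : closure (sgSet ω) ⊆ C ∪ {0} := by
      rw [hC]
      have : sgSet ω ⊆ (sgSet ω \ {0}) ∪ {0} := by
        intro z hz
        by_cases h : z = 0
        · exact Or.inr h
        · exact Or.inl ⟨hz, h⟩
      calc closure (sgSet ω) ⊆ closure ((sgSet ω \ {0}) ∪ {0}) := closure_mono this
        _ = closure (sgSet ω \ {0}) ∪ closure {0} := closure_union
        _ ⊆ closure (sgSet ω \ {0}) ∪ {0} := by rw [closure_singleton]
    rcases hsub hγcl with h | h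
    · exact h
    · exact absurd h hγ0
  ext z
  simp only [Set.mem_inter_iff, Set.mem_empty_iff_false, iff_false, not_and]
  intro hz hz'
  obtain ⟨y, hy, hyz⟩ := hz'
  have hmem : ((z, y) : Γ × Γ) ∈ u ×ˢ v := ⟨(hXsub hz).1, (hXsub hy).2⟩
  have : z - y ∈ Cᶜ := huv hmem
  apply this
  have : z - y = γ := by simp only [← hyz]; abel
  rw [this]
  exact hγC
end

section
/- Suppose $K\omega_1 = 0$ for the smallest positive integer $K$, and there is no sequence of nonempty words $\mu_k$ (in positive integers) with first letter $\neq 1$ such that $\omega_{\mu_k} \to 0$. Then for any $\gamma \in \Gamma$, $\gamma \notin H_{\gamma + \overline{\mathrm{sg}}(\omega)}$. -/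
open Set Filter Topology

variable {Γ : Type*}

lemma sg_add_smul [AddCommMonoid Γ] (ω : ℕ → Γ) {s : Γ} (hs : s ∈ sgSet ω) (m : ℕ) :
    s + m • ω 1 ∈ sgSet ω := by
  obtain ⟨μ, hμ, rfl⟩ := hs
  refine ⟨μ ++ List.replicate m 1, ?_, ?_⟩
  · intro i hi
    rcases List.mem_append.1 hi with h | h
    · exact hμ i h
    · simp [List.eq_of_mem_replicate h]
  · simp [wsum, List.sum_replicate]

theorem stmt13 [AddCommGroup Γ] [TopologicalSpace Γ] [IsTopologicalAddGroup Γ]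
    [LocallyCompactSpace Γ] [SecondCountableTopology Γ] [T2Space Γ]
    (ω : ℕ → Γ) (K : ℕ) (hK : 1 ≤ K) (hK0 : K • ω 1 = 0)
    (hmin : ∀ m : ℕ, 1 ≤ m → m • ω 1 = 0 → K ≤ m)
    (hnoseq : ¬ ∃ μ : ℕ → List ℕ,
      (∀ k, IsWord (μ k) ∧ μ k ≠ [] ∧ (μ k).head? ≠ some 1) ∧
        Tendsto (fun k => wsum ω (μ k)) atTop (𝓝 0)) :
    ∀ γ : Γ, γ ∉ HX ω ((fun s => γ + s) '' closure (sgSet ω)) := by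
  intro γ hγ
  set X : Set Γ := (fun s => γ + s) '' closure (sgSet ω) with hXdef
  -- X ⊆ X + ω 1
  have hX1 : X ⊆ trSet X (ω 1) := by
    rintro _ ⟨s, hs, rfl⟩
    have hsub : sgSet ω ⊆ (fun t => t + ω 1) '' sgSet ω := by
      intro t ht
      refine ⟨t + (K - 1) • ω 1, sg_add_smul ω ht _, ?_⟩
      have h1 : (K - 1) • ω 1 + ω 1 = K • ω 1 := by
        rw [← succ_nsmul, Nat.sub_add_cancel hK]
      show t + (K - 1) • ω 1 + ω 1 = t
      rw [add_assoc, h1, hK0, add_zero]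
    have hs2 : s ∈ closure ((fun t => t + ω 1) '' sgSet ω) :=
      closure_mono hsub hs
    rw [show (fun t : Γ => t + ω 1) = ⇑(Homeomorph.addRight (ω 1)) from rfl,
      ← Homeomorph.image_closure] at hs2
    obtain ⟨t, ht, hts⟩ := hs2
    exact ⟨γ + t, ⟨t, ht, rfl⟩, by simp [← hts, add_assoc]⟩
  -- the key closed set C
  set C : Set Γ := closure (⋃ i ≥ 2, (fun t => t + ω i) '' sgSet ω) with hCdef
  have hC0 : (0 : Γ) ∉ C := by
    intro h0
    obtain ⟨u, hu, hulim⟩ := mem_closure_iff_seq_limit.1 h0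
    have hch : ∀ k, ∃ i : ℕ, 2 ≤ i ∧ ∃ ν : List ℕ, IsWord ν ∧ u k = wsum ω ν + ω i := by
      intro k
      have := hu k
      simp only [Set.mem_iUnion] at this
      obtain ⟨i, hi, t, ⟨ν, hν, rfl⟩, hti⟩ := this
      exact ⟨i, hi, ν, hν, hti.symm⟩
    choose i hi ν hν huk using hch
    refine hnoseq ⟨fun k => i k :: ν k, fun k => ⟨?_, by simp, ?_⟩, ?_⟩
    · intro j hj
      rcases List.mem_cons.1 hj with rfl | h
      · exact le_trans (by norm_num) (hi k)
      · exact hν k j h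
    · simp only [List.head?_cons, Ne, Option.some.injEq]
      intro h
      have := hi k
      omega
    · have heq : (fun k => wsum ω (i k :: ν k)) = u := by
        funext k
        rw [huk k]
        simp [wsum, add_comm]
      rw [heq]
      exact hulim
  -- reduction of the tail part to C
  have hsub2 : (⋃ i ≥ 2, trSet X (ω i)) ⊆ (fun s => γ + s) '' C := by
    intro x hx
    simp only [Set.mem_iUnion] at hx
    obtain ⟨j, hj, y, ⟨s, hs, rfl⟩, rfl⟩ := hx
    refine ⟨s + ω j, ?_, by simp [add_assoc]⟩
    have hmem : s + ω j ∈ (fun t : Γ => t + ω j) '' closure (sgSet ω) := ⟨s, hs, rfl⟩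
    rw [show (fun t : Γ => t + ω j) = ⇑(Homeomorph.addRight (ω j)) from rfl,
      Homeomorph.image_closure] at hmem
    have : closure ((⇑(Homeomorph.addRight (ω j))) '' sgSet ω) ⊆ C := by
      rw [hCdef]
      refine closure_mono ?_
      exact Set.subset_iUnion₂ (s := fun i _ => (fun t => t + ω i) '' sgSet ω) j hj
    exact this hmem
  have hclos2 : closure (⋃ i ≥ 2, trSet X (ω i)) ⊆ (fun s => γ + s) '' C := by
    have hcl : IsClosed ((fun s => γ + s) '' C) := by
      rw [show (fun s : Γ => γ + s) = ⇑(Homeomorph.addLeft γ) from rfl]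
      exact (Homeomorph.addLeft γ).isClosedMap _ isClosed_closure
    exact closure_minimal hsub2 hcl
  rcases hγ with h | h
  · -- first component is empty
    have hemp : X \ ⋃ i ≥ 1, trSet X (ω i) = ∅ := by
      ext x
      simp only [Set.mem_diff, Set.mem_empty_iff_false, iff_false, not_and, not_not]
      intro hxX
      exact Set.mem_biUnion (le_refl 1) (hX1 hxX)
    rw [hemp, closure_empty] at h
    exact h
  · have h2 : γ ∈ closure (⋃ i ≥ 2, trSet X (ω i)) := by
      simp only [Set.mem_iInter] at h
      exact h 2 (by norm_num)
    obtain ⟨c, hc, hcγ⟩ := hclos2 h2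
    have hc0 : c = 0 := by simpa using hcγ
    rw [hc0] at hc
    exact hC0 hc
end

section
/- For any sequence $\omega$ in $\Gamma$, $\{0\} \cup H_{\overline{\mathrm{sg}}(\omega)} = \{0\} \cup \bigcap_{n=1}^\infty \overline{\bigcup_{i=n}^\infty (\mathrm{sg}(\omega) + \omega_i)}$. -/
open Set Filter Topology

variable {Γ : Type*}

section stmt15aux
variable [AddCommGroup Γ] [TopologicalSpace Γ] [IsTopologicalAddGroup Γ]

lemma trSet_closure' (S : Set Γ) (g : Γ) :
    trSet (closure S) g = closure (trSet S g) :=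
  (Homeomorph.addRight g).image_closure S

lemma clos_eq' (ω : ℕ → Γ) (n : ℕ) :
    closure (⋃ i ≥ n, trSet (closure (sgSet ω)) (ω i)) =
      closure (⋃ i ≥ n, trSet (sgSet ω) (ω i)) := by
  apply subset_antisymm
  · apply closure_minimal _ isClosed_closure
    refine iUnion₂_subset fun i hi => ?_
    rw [trSet_closure']
    exact closure_mono (subset_iUnion₂ (s := fun i (_ : i ≥ n) => trSet (sgSet ω) (ω i)) i hi)
  · exact closure_mono (iUnion₂_mono fun i hi => image_mono subset_closure)

omit [TopologicalSpace Γ] [IsTopologicalAddGroup Γ] in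
lemma sg_cases' (ω : ℕ → Γ) {γ : Γ} (h : γ ∈ sgSet ω) :
    γ = 0 ∨ ∃ i, 1 ≤ i ∧ γ ∈ trSet (sgSet ω) (ω i) := by
  obtain ⟨μ, hμ, rfl⟩ := h
  cases μ with
  | nil => left; simp [wsum]
  | cons j rest =>
    right
    refine ⟨j, hμ j (List.mem_cons_self),
      ⟨wsum ω rest, ⟨rest, fun i hi => hμ i (List.mem_cons_of_mem _ hi), rfl⟩, ?_⟩⟩
    simp [wsum, add_comm]

lemma key' [T1Space Γ] (ω : ℕ → Γ) :
    closure (sgSet ω) \ (⋃ i ≥ 1, trSet (closure (sgSet ω)) (ω i)) ⊆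
      {(0:Γ)} ∪ ⋂ n ≥ 1, closure (⋃ i ≥ n, trSet (sgSet ω) (ω i)) := by
  rintro x ⟨hx, hnx⟩
  by_cases hx0 : x = 0
  · exact Or.inl hx0
  right
  simp only [mem_iInter]
  intro n _
  rw [mem_closure_iff]
  intro O hO hxO
  by_contra hcon
  rw [not_nonempty_iff_eq_empty] at hcon
  have hT : x ∈ closure (⋃ i ∈ Finset.Ico 1 n, trSet (sgSet ω) (ω i)) := by
    rw [mem_closure_iff]
    intro W hW hxW
    have hO' : IsOpen (W ∩ (O \ {0})) := hW.inter (hO.sdiff isClosed_singleton)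
    have hxO' : x ∈ W ∩ (O \ {0}) := ⟨hxW, hxO, hx0⟩
    obtain ⟨y, hyO, hy⟩ := mem_closure_iff.mp hx _ hO' hxO'
    rcases sg_cases' ω hy with h0 | ⟨i, hi1, hyi⟩
    · exact absurd h0 hyO.2.2
    rcases lt_or_ge i n with hin | hin
    · exact ⟨y, hyO.1, mem_iUnion₂.mpr ⟨i, Finset.mem_Ico.mpr ⟨hi1, hin⟩, hyi⟩⟩
    · exact absurd ⟨hyO.2.1, mem_iUnion₂.mpr ⟨i, hin, hyi⟩⟩
        (eq_empty_iff_forall_notMem.mp hcon y)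
  rw [(Finset.Ico 1 n).closure_biUnion] at hT
  obtain ⟨i, hi, hxi⟩ := mem_iUnion₂.mp hT
  rw [← trSet_closure'] at hxi
  exact hnx (mem_iUnion₂.mpr ⟨i, (Finset.mem_Ico.mp hi).1, hxi⟩)

end stmt15aux

theorem stmt15 [AddCommGroup Γ] [TopologicalSpace Γ] [IsTopologicalAddGroup Γ]
    [LocallyCompactSpace Γ] [SecondCountableTopology Γ] [T2Space Γ]
    (ω : ℕ → Γ) :
    {(0 : Γ)} ∪ HX ω (closure (sgSet ω)) =
      {(0 : Γ)} ∪ ⋂ n ≥ 1, closure (⋃ i ≥ n, trSet (sgSet ω) (ω i)) := by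
  unfold HX
  have hI : (⋂ n ≥ 1, closure (⋃ i ≥ n, trSet (closure (sgSet ω)) (ω i))) =
      ⋂ n ≥ 1, closure (⋃ i ≥ n, trSet (sgSet ω) (ω i)) :=
    iInter_congr fun n => iInter_congr fun _ => clos_eq' ω n
  rw [hI]
  have hclosed : IsClosed ({(0:Γ)} ∪ ⋂ n ≥ 1, closure (⋃ i ≥ n, trSet (sgSet ω) (ω i))) :=
    isClosed_singleton.union
      (isClosed_iInter fun n => isClosed_iInter fun _ => isClosed_closure)
  apply subset_antisymm
  · refine union_subset subset_union_left (union_subset ?_ subset_union_right)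
    exact (closure_minimal (key' ω) hclosed)
  · exact union_subset_union_right _ subset_union_right
end

section
/- Let $(X, X^{(\infty)})$ be an $\omega$-invariant pair. Then $X^{(\infty)} + (\{0\} \cup H_{\overline{\mathrm{sg}}(\omega)}) \subset X^{(\infty)}$ and $X + (\{0\} \cup H_{\overline{\mathrm{sg}}(\omega)}) \subset X$. In particular, for every $\gamma \in X$, $\gamma + \bigcap_{n=1}^\infty \overline{\bigcup_{i=n}^\infty (\mathrm{sg}(\omega)+\omega_i)} \subset X^{(\infty)}$. -/
open Set Filter Topology

variable {Γ : Type*}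

lemma wsum_mem_aux [AddCommGroup Γ] [TopologicalSpace Γ] {ω : ℕ → Γ} {X : Set Γ}
    (hX : OmegaInv ω X) : ∀ μ : List ℕ, IsWord μ → ∀ γ ∈ X, γ + wsum ω μ ∈ X := by
  intro μ
  induction μ with
  | nil => intro _ γ hγ; simpa [wsum] using hγ
  | cons i μ ih =>
    intro hw γ hγ
    have h1 : 1 ≤ i := hw i (List.mem_cons_self)
    have hγi : γ + ω i ∈ X := hX.2 i h1 ⟨γ, hγ, rfl⟩
    have hrec := ih (fun j hj => hw j (List.mem_cons_of_mem _ hj)) _ hγi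
    have e : γ + wsum ω (i :: μ) = (γ + ω i) + wsum ω μ := by
      simp only [wsum, List.map_cons, List.sum_cons]; abel
    rw [e]; exact hrec

/-- core lemma: `X + T ⊆ Xinf`. -/
lemma X_add_T_subset [AddCommGroup Γ] [TopologicalSpace Γ] [IsTopologicalAddGroup Γ]
    {ω : ℕ → Γ} {X Xinf : Set Γ} (h : OmegaInvPair ω X Xinf) {γ : Γ} (hγ : γ ∈ X) {t : Γ}
    (ht : t ∈ ⋂ n ≥ 1, closure (⋃ i ≥ n, trSet (sgSet ω) (ω i))) : γ + t ∈ Xinf := by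
  apply h.2.2.1
  apply Set.mem_union_right
  simp only [Set.mem_iInter] at ht ⊢
  intro n hn
  have h1 : γ + t ∈ (fun x => γ + x) '' closure (⋃ i ≥ n, trSet (sgSet ω) (ω i)) :=
    ⟨t, ht n hn, rfl⟩
  have h2 : γ + t ∈ closure ((fun x => γ + x) '' ⋃ i ≥ n, trSet (sgSet ω) (ω i)) :=
    image_closure_subset_closure_image (continuous_add_left γ) h1
  refine closure_mono ?_ h2
  rintro x ⟨y, hy, rfl⟩
  simp only [Set.mem_iUnion] at hy ⊢
  obtain ⟨i, hi, s, hs, rfl⟩ := hy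
  obtain ⟨μ, hμ, rfl⟩ := hs
  exact ⟨i, hi, γ + wsum ω μ, wsum_mem_aux h.1 μ hμ γ hγ, by abel_nf⟩

/-- `{0} ∪ H_{closure sg} ⊆ {0} ∪ T`. -/
lemma HX_sg_subset [AddCommGroup Γ] [TopologicalSpace Γ] [IsTopologicalAddGroup Γ] [T2Space Γ]
    (ω : ℕ → Γ) :
    HX ω (closure (sgSet ω)) ⊆
      {(0 : Γ)} ∪ ⋂ n ≥ 1, closure (⋃ i ≥ n, trSet (sgSet ω) (ω i)) := by
  have htr : ∀ (i : ℕ), trSet (closure (sgSet ω)) (ω i) ⊆ closure (trSet (sgSet ω) (ω i)) :=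
    fun i => image_closure_subset_closure_image (continuous_add_right (ω i))
  have htrcl : ∀ (i : ℕ), IsClosed (trSet (closure (sgSet ω)) (ω i)) := fun i =>
    (Homeomorph.addRight (ω i)).isClosedMap _ isClosed_closure
  rintro h (hc | hT)
  · -- from the closure of the "base" part
    have hTcl : IsClosed ({(0 : Γ)} ∪ ⋂ n ≥ 1, closure (⋃ i ≥ n, trSet (sgSet ω) (ω i))) :=
      isClosed_singleton.union (isClosed_biInter fun n _ => isClosed_closure)
    refine closure_minimal ?_ hTcl hc
    rintro γ ⟨hγS, hγn⟩
    by_cases h0 : γ = 0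
    · exact Or.inl h0
    refine Or.inr ?_
    -- γ ∈ closure (⋃ i ≥ 1, sg + ω i)
    have hsub : sgSet ω ⊆ {(0 : Γ)} ∪ ⋃ i ≥ 1, trSet (sgSet ω) (ω i) := by
      rintro s ⟨μ, hμ, rfl⟩
      match μ with
      | [] => exact Or.inl (by simp [wsum])
      | i :: ν =>
        refine Or.inr ?_
        simp only [Set.mem_iUnion]
        refine ⟨i, hμ i (List.mem_cons_self), wsum ω ν,
          ⟨ν, fun j hj => hμ j (List.mem_cons_of_mem _ hj), rfl⟩, ?_⟩
        simp only [wsum, List.map_cons, List.sum_cons]; abel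
    have hγU : γ ∈ closure (⋃ i ≥ 1, trSet (sgSet ω) (ω i)) := by
      have := closure_mono hsub hγS
      rw [closure_union, closure_singleton] at this
      rcases this with h' | h'
      · exact absurd h' h0
      · exact h'
    simp only [Set.mem_iInter]
    intro n hn
    rw [mem_closure_iff]
    intro o ho hγo
    set C : Set Γ := ⋃ i ∈ Finset.Ico 1 n, trSet (closure (sgSet ω)) (ω i) with hC
    have hCcl : IsClosed C := (Finset.Ico 1 n).finite_toSet.isClosed_biUnion fun i _ => htrcl i
    have hγC : γ ∉ C := by
      intro hmem
      simp only [hC, Set.mem_iUnion, Finset.mem_Ico] at hmem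
      obtain ⟨i, ⟨hi1, _⟩, hmi⟩ := hmem
      exact hγn (Set.mem_iUnion.2 ⟨i, Set.mem_iUnion.2 ⟨hi1, hmi⟩⟩)
    have hV : IsOpen (o ∩ Cᶜ) := ho.inter hCcl.isOpen_compl
    have hγV : γ ∈ o ∩ Cᶜ := ⟨hγo, hγC⟩
    obtain ⟨x, ⟨hxo, hxC⟩, hxU⟩ := (mem_closure_iff.1 hγU) _ hV hγV
    simp only [Set.mem_iUnion] at hxU
    obtain ⟨i, hi1, hxi⟩ := hxU
    have hni : n ≤ i := by
      by_contra hlt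
      push_neg at hlt
      exact hxC (Set.mem_biUnion (Finset.mem_Ico.2 ⟨hi1, hlt⟩)
        (Set.image_mono subset_closure hxi))
    exact ⟨x, hxo, Set.mem_iUnion.2 ⟨i, Set.mem_iUnion.2 ⟨hni, hxi⟩⟩⟩
  · -- from the intersection part
    refine Or.inr ?_
    simp only [Set.mem_iInter] at hT ⊢
    intro n hn
    refine closure_minimal ?_ isClosed_closure (hT n hn)
    intro x hx
    simp only [Set.mem_iUnion] at hx
    obtain ⟨i, hi, hxi⟩ := hx
    exact closure_mono (fun y hy => Set.mem_iUnion.2 ⟨i, Set.mem_iUnion.2 ⟨hi, hy⟩⟩)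
      (htr i hxi)

theorem stmt16 [AddCommGroup Γ] [TopologicalSpace Γ] [IsTopologicalAddGroup Γ]
    [LocallyCompactSpace Γ] [SecondCountableTopology Γ] [T2Space Γ]
    (ω : ℕ → Γ) (X Xinf : Set Γ) (h : OmegaInvPair ω X Xinf) :
    Set.image2 (· + ·) Xinf ({(0 : Γ)} ∪ HX ω (closure (sgSet ω))) ⊆ Xinf ∧
      Set.image2 (· + ·) X ({(0 : Γ)} ∪ HX ω (closure (sgSet ω))) ⊆ X ∧
      ∀ γ ∈ X,
        (fun s => γ + s) '' (⋂ n ≥ 1, closure (⋃ i ≥ n, trSet (sgSet ω) (ω i)))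
          ⊆ Xinf := by
  have key : ∀ b ∈ ({(0 : Γ)} ∪ HX ω (closure (sgSet ω))),
      b = 0 ∨ b ∈ ⋂ n ≥ 1, closure (⋃ i ≥ n, trSet (sgSet ω) (ω i)) := by
    rintro b (hb | hb)
    · exact Or.inl hb
    · rcases HX_sg_subset ω hb with hb' | hb'
      · exact Or.inl hb'
      · exact Or.inr hb'
  refine ⟨?_, ?_, ?_⟩
  · rintro x ⟨a, ha, b, hb, rfl⟩
    rcases key b hb with rfl | hbT
    · simpa using ha
    · exact X_add_T_subset h (h.2.2.2 ha) hbT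
  · rintro x ⟨a, ha, b, hb, rfl⟩
    rcases key b hb with rfl | hbT
    · simpa using ha
    · exact h.2.2.2 (X_add_T_subset h ha hbT)
  · rintro γ hγ x ⟨t, ht, rfl⟩
    exact X_add_T_subset h hγ ht
end

section
/- Suppose the closed subgroup of $\Gamma$ generated by $\{\omega_i\}_{i \geq 1}$ equals $\Gamma$. Then $\Gamma$ is a prime $\omega$-invariant set. Conversely, if $\Gamma$ is a prime $\omega$-invariant set, then the closed group generated by $\{\omega_i\}$ is $\Gamma$. -/
open Set Filter Topology

variable {Γ : Type*}

lemma inv_wsum [AddCommGroup Γ] [TopologicalSpace Γ] {ω : ℕ → Γ} {X : Set Γ}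
    (hX : OmegaInv ω X) : ∀ μ : List ℕ, IsWord μ → ∀ x ∈ X, x + wsum ω μ ∈ X := by
  intro μ
  induction μ with
  | nil => intro _ x hx; simpa [wsum] using hx
  | cons i μ ih =>
    intro hw x hx
    have h1 : 1 ≤ i := hw i (List.mem_cons_self)
    have hx' : x + ω i ∈ X := hX.2 i h1 ⟨x, hx, rfl⟩
    have h2 := ih (fun j hj => hw j (List.mem_cons_of_mem _ hj)) _ hx'
    simpa [wsum, add_assoc] using h2

lemma wsum_mem [AddCommGroup Γ] (ω : ℕ → Γ) :
    ∀ μ : List ℕ, IsWord μ → wsum ω μ ∈ AddSubgroup.closure (ω '' {i | 1 ≤ i}) := by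
  intro μ
  induction μ with
  | nil => intro _; simpa [wsum] using (AddSubgroup.closure (ω '' {i | 1 ≤ i})).zero_mem
  | cons i μ ih =>
    intro hw
    have h1 : ω i ∈ ω '' {i | 1 ≤ i} := ⟨i, hw i (List.mem_cons_self), rfl⟩
    have h2 := ih (fun j hj => hw j (List.mem_cons_of_mem _ hj))
    simpa [wsum] using add_mem (AddSubgroup.subset_closure h1) h2

lemma mem_decomp [AddCommGroup Γ] (ω : ℕ → Γ) {g : Γ}
    (hg : g ∈ AddSubgroup.closure (ω '' {i | 1 ≤ i})) :
    ∃ μ ν : List ℕ, IsWord μ ∧ IsWord ν ∧ g = wsum ω μ - wsum ω ν := by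
  induction hg using AddSubgroup.closure_induction with
  | mem x hx =>
    obtain ⟨i, hi, rfl⟩ := hx
    refine ⟨[i], [], ?_, ?_, by simp [wsum]⟩
    · intro j hj; simp at hj; subst hj; exact hi
    · intro j hj; simp at hj
  | zero => exact ⟨[], [], fun j hj => by simp at hj, fun j hj => by simp at hj, by simp [wsum]⟩
  | add a b _ _ iha ihb =>
    obtain ⟨μ1, ν1, hμ1, hν1, rfl⟩ := iha
    obtain ⟨μ2, ν2, hμ2, hν2, rfl⟩ := ihb
    refine ⟨μ1 ++ μ2, ν1 ++ ν2, ?_, ?_, ?_⟩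
    · intro j hj; rcases List.mem_append.mp hj with h | h
      exacts [hμ1 j h, hμ2 j h]
    · intro j hj; rcases List.mem_append.mp hj with h | h
      exacts [hν1 j h, hν2 j h]
    · simp [wsum]; abel
  | neg a _ iha =>
    obtain ⟨μ, ν, hμ, hν, rfl⟩ := iha
    exact ⟨ν, μ, hν, hμ, by abel⟩

lemma char_of_prime [AddCommGroup Γ] [TopologicalSpace Γ] [IsTopologicalAddGroup Γ]
    {ω : ℕ → Γ} (hp : PrimeCond ω Set.univ)
    {U1 U2 : Set Γ} (hU1 : IsOpen U1) (hU2 : IsOpen U2)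
    {γ1 γ2 : Γ} (h1 : γ1 ∈ U1) (h2 : γ2 ∈ U2) :
    ∃ (γ : Γ) (μ1 μ2 : List ℕ), IsWord μ1 ∧ IsWord μ2 ∧
      γ + wsum ω μ1 ∈ U1 ∧ γ + wsum ω μ2 ∈ U2 := by
  by_contra hcon
  push_neg at hcon
  set X1 : Set Γ := ⋂ μ ∈ {μ : List ℕ | IsWord μ}, (fun γ => γ + wsum ω μ) ⁻¹' U1ᶜ with hX1
  set X2 : Set Γ := ⋂ μ ∈ {μ : List ℕ | IsWord μ}, (fun γ => γ + wsum ω μ) ⁻¹' U2ᶜ with hX2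
  have hmem1 : ∀ γ : Γ, γ ∈ X1 ↔ ∀ μ, IsWord μ → γ + wsum ω μ ∉ U1 := by
    intro γ; simp [hX1]
  have hmem2 : ∀ γ : Γ, γ ∈ X2 ↔ ∀ μ, IsWord μ → γ + wsum ω μ ∉ U2 := by
    intro γ; simp [hX2]
  have hinv : ∀ (U : Set Γ), IsOpen U →
      OmegaInv ω (⋂ μ ∈ {μ : List ℕ | IsWord μ}, (fun γ => γ + wsum ω μ) ⁻¹' Uᶜ) := by
    intro U hU
    constructor
    · exact isClosed_biInter fun μ _ =>
        (isClosed_compl_iff.mpr hU).preimage (continuous_add_right _)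
    · rintro i hi x ⟨y, hy, rfl⟩
      simp only [Set.mem_iInter, Set.mem_preimage, Set.mem_compl_iff] at hy ⊢
      intro μ hμ
      have := hy (i :: μ) (by
        intro j hj
        rcases List.mem_cons.mp hj with h | h
        · exact h ▸ hi
        · exact hμ j h)
      simpa [wsum, add_assoc] using this
  have hcov : Set.univ ⊆ X1 ∪ X2 := by
    intro γ _
    by_contra hγ
    simp only [Set.mem_union, not_or] at hγ
    obtain ⟨hγ1, hγ2⟩ := hγ
    rw [hmem1] at hγ1; rw [hmem2] at hγ2
    push_neg at hγ1 hγ2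
    obtain ⟨μ1, hμ1, hin1⟩ := hγ1
    obtain ⟨μ2, hμ2, hin2⟩ := hγ2
    exact hcon γ μ1 μ2 hμ1 hμ2 hin1 hin2
  rcases hp X1 X2 (hinv U1 hU1) (hinv U2 hU2) hcov with h | h
  · have := (hmem1 γ1).mp (h (Set.mem_univ γ1)) [] (fun j hj => by simp at hj)
    simp [wsum] at this
    exact this h1
  · have := (hmem2 γ2).mp (h (Set.mem_univ γ2)) [] (fun j hj => by simp at hj)
    simp [wsum] at this
    exact this h2

theorem stmt18 [AddCommGroup Γ] [TopologicalSpace Γ] [IsTopologicalAddGroup Γ]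
    [LocallyCompactSpace Γ] [SecondCountableTopology Γ] [T2Space Γ]
    (ω : ℕ → Γ) :
    closure ((AddSubgroup.closure (ω '' {i | 1 ≤ i}) : AddSubgroup Γ) : Set Γ)
        = Set.univ ↔ PrimeCond ω Set.univ := by
  constructor
  · intro hd X1 X2 h1 h2 hcov
    by_cases hX1 : Set.univ ⊆ X1
    · exact Or.inl hX1
    right
    obtain ⟨a, -, ha⟩ : ∃ a ∈ Set.univ, a ∉ X1 := Set.not_subset.mp hX1
    intro b _
    by_contra hb
    have hdense : Dense ((AddSubgroup.closure (ω '' {i | 1 ≤ i}) : AddSubgroup Γ) : Set Γ) :=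
      dense_iff_closure_eq.mpr hd
    have hVopen : IsOpen ((fun g => a + g) ⁻¹' X2ᶜ) :=
      (h2.1.isOpen_compl).preimage (continuous_add_left a)
    have hVne : ((fun g => a + g) ⁻¹' X2ᶜ).Nonempty := ⟨b - a, by simpa using hb⟩
    obtain ⟨g, hgG, hgV⟩ := hdense.exists_mem_open hVopen hVne
    obtain ⟨μ, ν, hμ, hν, rfl⟩ := mem_decomp ω hgG
    rcases hcov (Set.mem_univ (a - wsum ω ν)) with hc | hc
    · have := inv_wsum h1 ν hν _ hc
      simp only [sub_add_cancel] at this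
      exact ha this
    · have := inv_wsum h2 μ hμ _ hc
      have he : a - wsum ω ν + wsum ω μ = a + (wsum ω μ - wsum ω ν) := by abel
      rw [he] at this
      exact hgV this
  · intro hp
    apply Set.eq_univ_of_forall
    intro γ2
    rw [mem_closure_iff]
    intro U hUo hγ2U
    have hpre : IsOpen ((fun p : Γ × Γ => p.1 - p.2) ⁻¹' U) :=
      hUo.preimage (continuous_fst.sub continuous_snd)
    obtain ⟨V1, V2, hV1, hV2, hm1, hm2, hsub⟩ :=
      isOpen_prod_iff.mp hpre γ2 0 (by simpa using hγ2U)
    obtain ⟨γ, μ1, μ2, hw1, hw2, hγ1, hγ2⟩ := char_of_prime hp hV2 hV1 hm2 hm1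
    refine ⟨wsum ω μ2 - wsum ω μ1, ?_,
      SetLike.mem_coe.mpr (sub_mem (wsum_mem ω μ2 hw2) (wsum_mem ω μ1 hw1))⟩
    have hmem := hsub (Set.mk_mem_prod hγ2 hγ1)
    have he : (γ + wsum ω μ2) - (γ + wsum ω μ1) = wsum ω μ2 - wsum ω μ1 := by abel
    simpa [he] using hmem
end
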